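/- arXiv:1212.6690 — 2 statements merged into one kernel-verified Lean document; each statement's English description precedes it below -/
import Mathlib

section
/- In the structural ME system of order 3, the error variance σ_2^2 of the second instrument satisfies σ_2^2 = Var(Y) − Cov(X,Y)·Cov(Y,Z)/Cov(X,Z), and σ_3^2 = Var(Z) − Cov(Y,Z)·Cov(X,Z)/Cov(X,Y), provided β_2, β_3 ≠ 0 and Var(μ) > 0. -/
open MeasureTheory ProbabilityTheory

/-- in the structural ME system of order 3, the error variances of
the second and third instruments satisfy
σ₂² = Var(Y) − Cov(X,Y)·Cov(Y,Z)/Cov(X,Z) and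
σ₃² = Var(Z) − Cov(Y,Z)·Cov(X,Z)/Cov(X,Y), provided β₂, β₃ ≠ 0 and Var(μ) > 0. -/
theorem stmt2
    {Ω : Type*} [MeasureSpace Ω] [IsProbabilityMeasure (ℙ : Measure Ω)]
    (μRV ε₁ ε₂ ε₃ : Ω → ℝ) (α₂ α₃ β₂ β₃ Δ σ1sq σ2sq σ3sq : ℝ)
    (hβ₂ : β₂ ≠ 0) (hβ₃ : β₃ ≠ 0)
    (hmeas : ∀ i, Measurable (![μRV, ε₁, ε₂, ε₃] i))
    (hL2 : ∀ i, MemLp (![μRV, ε₁, ε₂, ε₃] i) 2 ℙ)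
    (hindep : iIndepFun ![μRV, ε₁, ε₂, ε₃] ℙ)
    (hε₁ : ∫ x, ε₁ x = 0) (hε₂ : ∫ x, ε₂ x = 0) (hε₃ : ∫ x, ε₃ x = 0)
    (hσ₁ : (∫ x, (ε₁ x) ^ 2) = σ1sq)
    (hσ₂ : (∫ x, (ε₂ x) ^ 2) = σ2sq)
    (hσ₃ : (∫ x, (ε₃ x) ^ 2) = σ3sq)
    (hΔ : (∫ x, (μRV x - ∫ y, μRV y) ^ 2) = Δ) (hΔpos : 0 < Δ)
    (X Y Z : Ω → ℝ)
    (hX : X = fun ω => μRV ω + ε₁ ω)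
    (hY : Y = fun ω => α₂ + β₂ * μRV ω + ε₂ ω)
    (hZ : Z = fun ω => α₃ + β₃ * μRV ω + ε₃ ω) :
    σ2sq = (∫ x, (Y x - ∫ y, Y y) ^ 2) -
      ((∫ x, X x * Y x) - (∫ x, X x) * (∫ x, Y x)) *
        ((∫ x, Y x * Z x) - (∫ x, Y x) * (∫ x, Z x)) /
        ((∫ x, X x * Z x) - (∫ x, X x) * (∫ x, Z x)) ∧
    σ3sq = (∫ x, (Z x - ∫ y, Z y) ^ 2) -
      ((∫ x, Y x * Z x) - (∫ x, Y x) * (∫ x, Z x)) *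
        ((∫ x, X x * Z x) - (∫ x, X x) * (∫ x, Z x)) /
        ((∫ x, X x * Y x) - (∫ x, X x) * (∫ x, Y x)) := by
  -- basic measurability
  have mμ : Measurable μRV := hmeas 0
  have mε₁ : Measurable ε₁ := hmeas 1
  have mε₂ : Measurable ε₂ := hmeas 2
  have mε₃ : Measurable ε₃ := hmeas 3
  -- integrability
  have iμ : Integrable μRV ℙ := (hL2 0).integrable one_le_two
  have iε₁ : Integrable ε₁ ℙ := (hL2 1).integrable one_le_two
  have iε₂ : Integrable ε₂ ℙ := (hL2 2).integrable one_le_two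
  have iε₃ : Integrable ε₃ ℙ := (hL2 3).integrable one_le_two
  have iμ2 : Integrable (fun x => μRV x ^ 2) ℙ := (hL2 0).integrable_sq
  have iε₂2 : Integrable (fun x => ε₂ x ^ 2) ℙ := (hL2 2).integrable_sq
  have iε₃2 : Integrable (fun x => ε₃ x ^ 2) ℙ := (hL2 3).integrable_sq
  -- pairwise independence
  have d01 : IndepFun μRV ε₁ ℙ := hindep.indepFun (show (0 : Fin 4) ≠ 1 by decide)
  have d02 : IndepFun μRV ε₂ ℙ := hindep.indepFun (show (0 : Fin 4) ≠ 2 by decide)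
  have d03 : IndepFun μRV ε₃ ℙ := hindep.indepFun (show (0 : Fin 4) ≠ 3 by decide)
  have d12 : IndepFun ε₁ ε₂ ℙ := hindep.indepFun (show (1 : Fin 4) ≠ 2 by decide)
  have d13 : IndepFun ε₁ ε₃ ℙ := hindep.indepFun (show (1 : Fin 4) ≠ 3 by decide)
  have d23 : IndepFun ε₂ ε₃ ℙ := hindep.indepFun (show (2 : Fin 4) ≠ 3 by decide)
  -- integrability of products
  have i01 : Integrable (fun x => μRV x * ε₁ x) ℙ := d01.integrable_mul iμ iε₁
  have i02 : Integrable (fun x => μRV x * ε₂ x) ℙ := d02.integrable_mul iμ iε₂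
  have i03 : Integrable (fun x => μRV x * ε₃ x) ℙ := d03.integrable_mul iμ iε₃
  have i12 : Integrable (fun x => ε₁ x * ε₂ x) ℙ := d12.integrable_mul iε₁ iε₂
  have i13 : Integrable (fun x => ε₁ x * ε₃ x) ℙ := d13.integrable_mul iε₁ iε₃
  have i23 : Integrable (fun x => ε₂ x * ε₃ x) ℙ := d23.integrable_mul iε₂ iε₃
  -- mean of μ
  set M : ℝ := ∫ x, μRV x with hMdef
  -- zero product integrals
  have z01 : (∫ x, μRV x * ε₁ x) = 0 := by
    rw [d01.integral_fun_mul_eq_mul_integral mμ.aestronglyMeasurable mε₁.aestronglyMeasurable, hε₁, mul_zero]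
  have z02 : (∫ x, μRV x * ε₂ x) = 0 := by
    rw [d02.integral_fun_mul_eq_mul_integral mμ.aestronglyMeasurable mε₂.aestronglyMeasurable, hε₂, mul_zero]
  have z03 : (∫ x, μRV x * ε₃ x) = 0 := by
    rw [d03.integral_fun_mul_eq_mul_integral mμ.aestronglyMeasurable mε₃.aestronglyMeasurable, hε₃, mul_zero]
  have z12 : (∫ x, ε₁ x * ε₂ x) = 0 := by
    rw [d12.integral_fun_mul_eq_mul_integral mε₁.aestronglyMeasurable mε₂.aestronglyMeasurable, hε₁, zero_mul]
  have z13 : (∫ x, ε₁ x * ε₃ x) = 0 := by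
    rw [d13.integral_fun_mul_eq_mul_integral mε₁.aestronglyMeasurable mε₃.aestronglyMeasurable, hε₁, zero_mul]
  have z23 : (∫ x, ε₂ x * ε₃ x) = 0 := by
    rw [d23.integral_fun_mul_eq_mul_integral mε₂.aestronglyMeasurable mε₃.aestronglyMeasurable, hε₂, zero_mul]
  -- second moment of μ
  have iμM2 : Integrable (fun x => (μRV x - M) ^ 2) ℙ :=
    ((hL2 0).sub (memLp_const M)).integrable_sq
  have hS : (∫ x, μRV x ^ 2) = Δ + M ^ 2 := by
    have e : (fun x => (μRV x - M) ^ 2)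
        = fun x => (μRV x ^ 2 - (2 * M) * μRV x) + M ^ 2 := by
      funext x; ring
    have h1 : (∫ x, (μRV x - M) ^ 2)
        = (∫ x, (μRV x ^ 2 - (2 * M) * μRV x)) + ∫ _x : Ω, (M ^ 2 : ℝ) := by
      rw [e]; exact integral_add (iμ2.sub (iμ.const_mul _)) (integrable_const _)
    rw [integral_sub iμ2 (iμ.const_mul _), integral_const_mul, integral_const] at h1
    rw [hΔ] at h1
    simp only [measure_univ, probReal_univ, ENNReal.toReal_one, smul_eq_mul, one_mul] at h1
    rw [← hMdef] at h1
    linarith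
  -- means
  have hEX : (∫ x, X x) = M := by
    rw [hX, integral_add iμ iε₁, hε₁, ← hMdef, add_zero]
  have hEY : (∫ x, Y x) = α₂ + β₂ * M := by
    have jY : Integrable (fun x => α₂ + β₂ * μRV x) ℙ :=
      (integrable_const α₂).add (iμ.const_mul β₂)
    rw [hY, integral_add jY iε₂,
      integral_add (integrable_const α₂) (iμ.const_mul β₂), integral_const, hε₂,
      integral_const_mul, add_zero]
    simp [measure_univ, hMdef]
  have hEZ : (∫ x, Z x) = α₃ + β₃ * M := by
    have jZ : Integrable (fun x => α₃ + β₃ * μRV x) ℙ :=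
      (integrable_const α₃).add (iμ.const_mul β₃)
    rw [hZ, integral_add jZ iε₃,
      integral_add (integrable_const α₃) (iμ.const_mul β₃), integral_const, hε₃,
      integral_const_mul, add_zero]
    simp [measure_univ, hMdef]
  -- E[XY]
  have hEXY : (∫ x, X x * Y x) = α₂ * M + β₂ * (Δ + M ^ 2) := by
    have e : (fun x => X x * Y x) = fun x =>
        ((((α₂ * μRV x + β₂ * μRV x ^ 2) + μRV x * ε₂ x) + α₂ * ε₁ x)
          + β₂ * (μRV x * ε₁ x)) + ε₁ x * ε₂ x := by
      funext x; rw [hX, hY]; ring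
    have j1 : Integrable (fun x => α₂ * μRV x + β₂ * μRV x ^ 2) ℙ :=
      (iμ.const_mul _).add (iμ2.const_mul _)
    have j2 : Integrable (fun x => (α₂ * μRV x + β₂ * μRV x ^ 2) + μRV x * ε₂ x) ℙ :=
      j1.add i02
    have j3 : Integrable (fun x =>
        ((α₂ * μRV x + β₂ * μRV x ^ 2) + μRV x * ε₂ x) + α₂ * ε₁ x) ℙ :=
      j2.add (iε₁.const_mul _)
    have j4 : Integrable (fun x =>
        (((α₂ * μRV x + β₂ * μRV x ^ 2) + μRV x * ε₂ x) + α₂ * ε₁ x)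
          + β₂ * (μRV x * ε₁ x)) ℙ := j3.add (i01.const_mul _)
    rw [e, integral_add j4 i12, integral_add j3 (i01.const_mul _),
      integral_add j2 (iε₁.const_mul _), integral_add j1 i02,
      integral_add (iμ.const_mul _) (iμ2.const_mul _),
      integral_const_mul, integral_const_mul, integral_const_mul, integral_const_mul,
      z01, z02, z12, hε₁, hS, ← hMdef]
    ring
  -- E[XZ]
  have hEXZ : (∫ x, X x * Z x) = α₃ * M + β₃ * (Δ + M ^ 2) := by
    have e : (fun x => X x * Z x) = fun x =>
        ((((α₃ * μRV x + β₃ * μRV x ^ 2) + μRV x * ε₃ x) + α₃ * ε₁ x)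
          + β₃ * (μRV x * ε₁ x)) + ε₁ x * ε₃ x := by
      funext x; rw [hX, hZ]; ring
    have j1 : Integrable (fun x => α₃ * μRV x + β₃ * μRV x ^ 2) ℙ :=
      (iμ.const_mul _).add (iμ2.const_mul _)
    have j2 : Integrable (fun x => (α₃ * μRV x + β₃ * μRV x ^ 2) + μRV x * ε₃ x) ℙ :=
      j1.add i03
    have j3 : Integrable (fun x =>
        ((α₃ * μRV x + β₃ * μRV x ^ 2) + μRV x * ε₃ x) + α₃ * ε₁ x) ℙ :=
      j2.add (iε₁.const_mul _)
    have j4 : Integrable (fun x =>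
        (((α₃ * μRV x + β₃ * μRV x ^ 2) + μRV x * ε₃ x) + α₃ * ε₁ x)
          + β₃ * (μRV x * ε₁ x)) ℙ := j3.add (i01.const_mul _)
    rw [e, integral_add j4 i13, integral_add j3 (i01.const_mul _),
      integral_add j2 (iε₁.const_mul _), integral_add j1 i03,
      integral_add (iμ.const_mul _) (iμ2.const_mul _),
      integral_const_mul, integral_const_mul, integral_const_mul, integral_const_mul,
      z01, z03, z13, hε₁, hS, ← hMdef]
    ring
  -- E[YZ]
  have hEYZ : (∫ x, Y x * Z x)
      = α₂ * α₃ + (α₂ * β₃ + α₃ * β₂) * M + β₂ * β₃ * (Δ + M ^ 2) := by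
    have e : (fun x => Y x * Z x) = fun x =>
        (((((((α₂ * α₃ + (α₂ * β₃ + α₃ * β₂) * μRV x) + (β₂ * β₃) * μRV x ^ 2)
          + α₂ * ε₃ x) + β₂ * (μRV x * ε₃ x)) + α₃ * ε₂ x)
          + β₃ * (μRV x * ε₂ x)) + ε₂ x * ε₃ x) := by
      funext x; rw [hY, hZ]; ring
    have j1 : Integrable (fun x => α₂ * α₃ + (α₂ * β₃ + α₃ * β₂) * μRV x) ℙ :=
      (integrable_const _).add (iμ.const_mul _)
    have j2 : Integrable (fun x =>
        (α₂ * α₃ + (α₂ * β₃ + α₃ * β₂) * μRV x) + (β₂ * β₃) * μRV x ^ 2) ℙ :=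
      j1.add (iμ2.const_mul _)
    have j3 : Integrable (fun x =>
        ((α₂ * α₃ + (α₂ * β₃ + α₃ * β₂) * μRV x) + (β₂ * β₃) * μRV x ^ 2)
          + α₂ * ε₃ x) ℙ := j2.add (iε₃.const_mul _)
    have j4 : Integrable (fun x =>
        (((α₂ * α₃ + (α₂ * β₃ + α₃ * β₂) * μRV x) + (β₂ * β₃) * μRV x ^ 2)
          + α₂ * ε₃ x) + β₂ * (μRV x * ε₃ x)) ℙ := j3.add (i03.const_mul _)
    have j5 : Integrable (fun x =>
        ((((α₂ * α₃ + (α₂ * β₃ + α₃ * β₂) * μRV x) + (β₂ * β₃) * μRV x ^ 2)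
          + α₂ * ε₃ x) + β₂ * (μRV x * ε₃ x)) + α₃ * ε₂ x) ℙ :=
      j4.add (iε₂.const_mul _)
    have j6 : Integrable (fun x =>
        (((((α₂ * α₃ + (α₂ * β₃ + α₃ * β₂) * μRV x) + (β₂ * β₃) * μRV x ^ 2)
          + α₂ * ε₃ x) + β₂ * (μRV x * ε₃ x)) + α₃ * ε₂ x)
          + β₃ * (μRV x * ε₂ x)) ℙ := j5.add (i02.const_mul _)
    rw [e, integral_add j6 i23, integral_add j5 (i02.const_mul _),
      integral_add j4 (iε₂.const_mul _), integral_add j3 (i03.const_mul _),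
      integral_add j2 (iε₃.const_mul _), integral_add j1 (iμ2.const_mul _),
      integral_add (integrable_const _) (iμ.const_mul _), integral_const,
      integral_const_mul, integral_const_mul, integral_const_mul, integral_const_mul,
      integral_const_mul, integral_const_mul,
      z02, z03, z23, hε₂, hε₃, hS, ← hMdef]
    simp only [measure_univ, probReal_univ, ENNReal.toReal_one, smul_eq_mul, one_mul]
    ring
  -- Var Y
  have hVarY : (∫ x, (Y x - ∫ y, Y y) ^ 2) = β₂ ^ 2 * Δ + σ2sq := by
    rw [hEY]
    have e : (fun x => (Y x - (α₂ + β₂ * M)) ^ 2) = fun x =>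
        ((β₂ ^ 2 * (μRV x - M) ^ 2 + (2 * β₂) * (μRV x * ε₂ x))
          + (-(2 * β₂ * M)) * ε₂ x) + ε₂ x ^ 2 := by
      funext x; rw [hY]; ring
    have j1 : Integrable (fun x =>
        β₂ ^ 2 * (μRV x - M) ^ 2 + (2 * β₂) * (μRV x * ε₂ x)) ℙ :=
      (iμM2.const_mul _).add (i02.const_mul _)
    have j2 : Integrable (fun x =>
        (β₂ ^ 2 * (μRV x - M) ^ 2 + (2 * β₂) * (μRV x * ε₂ x))
          + (-(2 * β₂ * M)) * ε₂ x) ℙ := j1.add (iε₂.const_mul _)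
    rw [e, integral_add j2 iε₂2, integral_add j1 (iε₂.const_mul _),
      integral_add (iμM2.const_mul _) (i02.const_mul _),
      integral_const_mul, integral_const_mul, integral_const_mul,
      z02, hε₂, hσ₂, hΔ]
    ring
  -- Var Z
  have hVarZ : (∫ x, (Z x - ∫ y, Z y) ^ 2) = β₃ ^ 2 * Δ + σ3sq := by
    rw [hEZ]
    have e : (fun x => (Z x - (α₃ + β₃ * M)) ^ 2) = fun x =>
        ((β₃ ^ 2 * (μRV x - M) ^ 2 + (2 * β₃) * (μRV x * ε₃ x))
          + (-(2 * β₃ * M)) * ε₃ x) + ε₃ x ^ 2 := by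
      funext x; rw [hZ]; ring
    have j1 : Integrable (fun x =>
        β₃ ^ 2 * (μRV x - M) ^ 2 + (2 * β₃) * (μRV x * ε₃ x)) ℙ :=
      (iμM2.const_mul _).add (i03.const_mul _)
    have j2 : Integrable (fun x =>
        (β₃ ^ 2 * (μRV x - M) ^ 2 + (2 * β₃) * (μRV x * ε₃ x))
          + (-(2 * β₃ * M)) * ε₃ x) ℙ := j1.add (iε₃.const_mul _)
    rw [e, integral_add j2 iε₃2, integral_add j1 (iε₃.const_mul _),
      integral_add (iμM2.const_mul _) (i03.const_mul _),
      integral_const_mul, integral_const_mul, integral_const_mul,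
      z03, hε₃, hσ₃, hΔ]
    ring
  -- covariances
  have hCxy : (∫ x, X x * Y x) - (∫ x, X x) * (∫ x, Y x) = β₂ * Δ := by
    rw [hEXY, hEX, hEY]; ring
  have hCxz : (∫ x, X x * Z x) - (∫ x, X x) * (∫ x, Z x) = β₃ * Δ := by
    rw [hEXZ, hEX, hEZ]; ring
  have hCyz : (∫ x, Y x * Z x) - (∫ x, Y x) * (∫ x, Z x) = β₂ * β₃ * Δ := by
    rw [hEYZ, hEY, hEZ]; ring
  have hΔne : Δ ≠ 0 := ne_of_gt hΔpos
  constructor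
  · rw [hVarY, hCxy, hCyz, hCxz]
    field_simp
    ring
  · rw [hVarZ, hCyz, hCxz, hCxy]
    field_simp
    ring
end

section
/- Under the functional ME system with limits μ̄ and Δ > 0 as in Proposition 1, the estimator β̂_2 = S_yz/S_xz converges in probability to β_2 as n → ∞, where S_yz and S_xz are the sample covariances of (Y_j, Z_j) and (X_j, Z_j). -/
open MeasureTheory ProbabilityTheory Filter Finset


open Real Topology

lemma aux_int_sq_exp {b : ℝ} (hb : 0 < b) :
    Integrable (fun x : ℝ => x ^ 2 * rexp (-b * x ^ 2)) := by
  apply Integrable.mono' ((integrable_exp_neg_mul_sq (half_pos hb)).const_mul (2 / b))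
  · exact ((measurable_id.pow_const 2).mul
      (((measurable_id.pow_const 2).const_mul (-b)).exp)).aestronglyMeasurable
  · filter_upwards with x
    rw [Real.norm_of_nonneg (by positivity)]
    have h1 := Real.add_one_le_exp ((b / 2) * x ^ 2)
    have h2 : rexp ((b / 2) * x ^ 2) * rexp (-b * x ^ 2) = rexp (-(b / 2) * x ^ 2) := by
      rw [← Real.exp_add]; ring_nf
    have h3 : 0 < rexp (-b * x ^ 2) := Real.exp_pos _
    have hx2 : b * x ^ 2 ≤ 2 * rexp (b / 2 * x ^ 2) := by nlinarith
    have h4 := mul_le_mul_of_nonneg_right hx2 h3.le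
    rw [div_mul_eq_mul_div, le_div_iff₀ hb]
    nlinarith

lemma aux_gaussian_memL2 (v : NNReal) : MemLp id 2 (gaussianReal 0 v) := by
  by_cases hv : v = 0
  · subst hv
    rw [gaussianReal_zero_var]
    refine MemLp.of_bound aestronglyMeasurable_id 0 ?_
    rw [MeasureTheory.ae_dirac_eq]
    exact Filter.eventually_pure.2 (by simp)
  · refine (memLp_two_iff_integrable_sq aestronglyMeasurable_id).2 ?_
    rw [gaussianReal_of_var_ne_zero _ hv]
    rw [integrable_withDensity_iff (measurable_gaussianPDF _ _)
      (ae_of_all _ fun x => ENNReal.ofReal_lt_top)]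
    have hb : 0 < ((2 : ℝ) * v)⁻¹ := by
      have : (0:ℝ) < v := by exact_mod_cast (show (0:NNReal) ≤ v from zero_le).lt_of_ne (Ne.symm hv)
      positivity
    have : Integrable (fun x : ℝ => (√(2 * π * v))⁻¹ * (x ^ 2 * rexp (-((2 : ℝ) * v)⁻¹ * x ^ 2))) :=
      (aux_int_sq_exp hb).const_mul _
    refine this.congr (ae_of_all _ fun x => ?_)
    simp only [gaussianPDF, gaussianPDFReal, id_eq]
    rw [ENNReal.toReal_ofReal (by positivity)]
    rw [show -(x - 0) ^ 2 / (2 * (v:ℝ)) = -((2:ℝ) * v)⁻¹ * x ^ 2 by ring]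
    ring

lemma aux_gaussian_integrable (v : NNReal) : Integrable id (gaussianReal 0 v) :=
  (aux_gaussian_memL2 v).integrable one_le_two

lemma aux_gaussian_mean (v : NNReal) : ∫ x, x ∂(gaussianReal 0 v) = 0 := by
  have hmap : (gaussianReal 0 v).map (fun x => -x) = gaussianReal 0 v := by
    have h1 := gaussianReal_map_const_mul (μ := 0) (v := v) (-1)
    have h2 : (fun x : ℝ => (-1) * x) = fun x : ℝ => -x := by funext x; ring
    rw [h2] at h1
    rw [h1]
    congr 1
    · ring
    · ext
      norm_num
  have h3 : ∫ x, x ∂((gaussianReal 0 v).map (fun x => -x)) = ∫ x, -x ∂(gaussianReal 0 v) := by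
    rw [integral_map measurable_neg.aemeasurable]
    rw [hmap]
    exact aestronglyMeasurable_id
  rw [hmap] at h3
  rw [integral_neg] at h3
  linarith

section Aux
variable {Ω : Type*} [MeasureSpace Ω] [IsProbabilityMeasure (ℙ : Measure Ω)]

lemma aux_multi_extract (L : List ((ℕ → Ω → ℝ) × ℝ))
    (hL : ∀ p ∈ L, TendstoInMeasure ℙ p.1 atTop (fun _ => p.2)) :
    ∀ ns : ℕ → ℕ, Tendsto ns atTop atTop → ∃ ms : ℕ → ℕ, Tendsto ms atTop atTop ∧
      ∀ᵐ ω ∂ℙ, ∀ p ∈ L, Tendsto (fun k => p.1 (ns (ms k)) ω) atTop (𝓝 p.2) := by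
  induction L with
  | nil =>
    intro ns hns
    exact ⟨id, tendsto_id, ae_of_all _ (by simp)⟩
  | cons q L ih =>
    intro ns hns
    have hq := hL q (by simp)
    have h1 : TendstoInMeasure ℙ (fun k => q.1 (ns k)) atTop (fun _ => q.2) :=
      fun ε hε => (hq ε hε).comp hns
    obtain ⟨ms1, hms1, hae1⟩ := h1.exists_seq_tendsto_ae
    obtain ⟨ms2, hms2, hae2⟩ := ih (fun p hp => hL p (by simp [hp]))
      (fun k => ns (ms1 k)) (hns.comp hms1.tendsto_atTop)
    refine ⟨ms1 ∘ ms2, hms1.tendsto_atTop.comp hms2, ?_⟩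
    filter_upwards [hae1, hae2] with ω h1ω h2ω
    intro p hp
    rcases List.mem_cons.1 hp with rfl | hp
    · exact h1ω.comp hms2
    · exact h2ω p hp

lemma aux_tim_avg {ξ : ℕ → Ω → ℝ}
    (hL2 : ∀ j, MemLp (ξ j) 2 ℙ) (hmean : ∀ j, ∫ ω, ξ j ω ∂ℙ = 0)
    (hind : Pairwise fun i j => IndepFun (ξ i) (ξ j) ℙ)
    (hvar : Tendsto (fun n : ℕ => (∑ j ∈ range n, variance (ξ j) ℙ) / (n : ℝ) ^ 2)
      atTop (𝓝 0)) :
    TendstoInMeasure ℙ (fun (n : ℕ) ω => ((n : ℝ))⁻¹ * ∑ j ∈ range n, ξ j ω) atTop (fun _ => 0) := by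
  rw [tendstoInMeasure_iff_dist]
  intro ε hε
  have key : ∀ n : ℕ,
      ℙ {ω | ε ≤ dist ((n : ℝ)⁻¹ * ∑ j ∈ range n, ξ j ω) 0} ≤
        ENNReal.ofReal ((∑ j ∈ range n, variance (ξ j) ℙ) / (n : ℝ) ^ 2 / ε ^ 2) := by
    intro n
    have hs : MemLp (∑ j ∈ range n, ξ j) 2 ℙ := memLp_finset_sum' _ fun j _ => hL2 j
    have heq : (fun ω => ∑ j ∈ range n, ξ j ω) = (∑ j ∈ range n, ξ j) := by
      ext ω; simp
    have hs' : MemLp (fun ω => ∑ j ∈ range n, ξ j ω) 2 ℙ := by rw [heq]; exact hs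
    have hXL2 : MemLp (fun ω => (n : ℝ)⁻¹ * ∑ j ∈ range n, ξ j ω) 2 ℙ := hs'.const_mul _
    have hEX : (∫ ω, (n : ℝ)⁻¹ * ∑ j ∈ range n, ξ j ω ∂ℙ) = 0 := by
      rw [integral_const_mul, integral_finset_sum _ (fun j _ => (hL2 j).integrable one_le_two)]
      simp [hmean]
    have hVX : variance (fun ω => (n : ℝ)⁻¹ * ∑ j ∈ range n, ξ j ω) ℙ =
        (∑ j ∈ range n, variance (ξ j) ℙ) / (n : ℝ) ^ 2 := by
      rw [variance_const_mul]
      have hsum : variance (fun ω => ∑ j ∈ range n, ξ j ω) ℙ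
          = ∑ j ∈ range n, variance (ξ j) ℙ := by
        rw [heq]
        exact IndepFun.variance_sum (μ := ℙ) (X := ξ) (s := range n)
          (fun j _ => hL2 j) (fun i _ j _ hij => hind hij)
      rw [hsum, div_eq_mul_inv, mul_comm, inv_pow]
    have := meas_ge_le_variance_div_sq (μ := ℙ) hXL2 hε
    rw [hEX, hVX] at this
    exact this
  have hlim : Tendsto (fun n : ℕ =>
      ENNReal.ofReal ((∑ j ∈ range n, variance (ξ j) ℙ) / (n : ℝ) ^ 2 / ε ^ 2))
      atTop (𝓝 0) := by
    have := (hvar.div_const (ε ^ 2))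
    rw [zero_div] at this
    simpa using (ENNReal.tendsto_ofReal this)
  exact tendsto_of_tendsto_of_tendsto_of_le_of_le tendsto_const_nhds hlim
    (fun n => zero_le) key

end Aux

lemma aux_cov_id (n : ℕ) (hn : (n:ℝ) ≠ 0) (a b : ℕ → ℝ) :
    (∑ j ∈ range n, (a j - (∑ i ∈ range n, a i)/(n:ℝ)) * (b j - (∑ i ∈ range n, b i)/(n:ℝ)))/(n:ℝ)
    = (n:ℝ)⁻¹ * (∑ j ∈ range n, a j * b j)
      - ((n:ℝ)⁻¹ * ∑ i ∈ range n, a i) * ((n:ℝ)⁻¹ * ∑ i ∈ range n, b i) := by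
  have h : ∀ j ∈ range n, (a j - (∑ i ∈ range n, a i)/(n:ℝ)) * (b j - (∑ i ∈ range n, b i)/(n:ℝ))
      = a j * b j - ((∑ i ∈ range n, b i)/(n:ℝ)) * a j - ((∑ i ∈ range n, a i)/(n:ℝ)) * b j
        + ((∑ i ∈ range n, a i)/(n:ℝ)) * ((∑ i ∈ range n, b i)/(n:ℝ)) :=
    fun j _ => by ring
  rw [Finset.sum_congr rfl h]
  simp only [Finset.sum_add_distrib, Finset.sum_sub_distrib, ← Finset.mul_sum,
    Finset.sum_const, card_range, nsmul_eq_mul]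
  field_simp
  ring

lemma aux_decomp (n : ℕ) (hn : (n:ℝ) ≠ 0) (α β α' β' : ℝ) (m e f : ℕ → ℝ) :
    (∑ j ∈ range n, ((α + β * m j + e j) - (∑ i ∈ range n, (α + β * m i + e i))/(n:ℝ)) *
       ((α' + β' * m j + f j) - (∑ i ∈ range n, (α' + β' * m i + f i))/(n:ℝ)))/(n:ℝ)
    = β*β'*((n:ℝ)⁻¹ * (∑ j ∈ range n, m j^2) - ((n:ℝ)⁻¹ * ∑ j ∈ range n, m j)^2)
      + β*((n:ℝ)⁻¹ * (∑ j ∈ range n, m j * f j)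
          - ((n:ℝ)⁻¹ * ∑ j ∈ range n, m j)*((n:ℝ)⁻¹ * ∑ j ∈ range n, f j))
      + β'*((n:ℝ)⁻¹ * (∑ j ∈ range n, m j * e j)
          - ((n:ℝ)⁻¹ * ∑ j ∈ range n, m j)*((n:ℝ)⁻¹ * ∑ j ∈ range n, e j))
      + ((n:ℝ)⁻¹ * (∑ j ∈ range n, e j * f j)
          - ((n:ℝ)⁻¹ * ∑ j ∈ range n, e j)*((n:ℝ)⁻¹ * ∑ j ∈ range n, f j)) := by
  rw [aux_cov_id n hn (fun j => α + β * m j + e j) (fun j => α' + β' * m j + f j)]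
  have h : ∀ j ∈ range n, (α + β * m j + e j) * (α' + β' * m j + f j)
      = α*α' + (α*β') * m j + α * f j + (β*α') * m j + (β*β') * (m j^2)
        + β * (m j * f j) + α' * e j + β' * (m j * e j) + e j * f j :=
    fun j _ => by ring
  rw [Finset.sum_congr rfl h]
  simp only [Finset.sum_add_distrib, ← Finset.mul_sum, Finset.sum_const, card_range,
    nsmul_eq_mul]
  field_simp
  ring

lemma aux_eps {Ω : Type*} [MeasureSpace Ω] [IsProbabilityMeasure (ℙ : Measure Ω)]
    {e : Ω → ℝ} {v : NNReal} (hm : Measurable e) (hg : Measure.map e ℙ = gaussianReal 0 v) :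
    MemLp e 2 ℙ ∧ (∫ ω, e ω ∂ℙ) = 0 ∧ (∫ ω, (e ω)^2 ∂ℙ) = (∫ x, x^2 ∂(gaussianReal 0 v))
      ∧ variance e ℙ = (∫ x, x^2 ∂(gaussianReal 0 v)) := by
  have h2 : MemLp e 2 ℙ := by
    have h := memLp_map_measure_iff (μ := ℙ) (p := 2) (f := e) (g := id) aestronglyMeasurable_id hm.aemeasurable
    rw [hg] at h
    exact h.mp (aux_gaussian_memL2 v)
  have hmean : (∫ ω, e ω ∂ℙ) = 0 := by
    have h : ∫ y, id y ∂(Measure.map e ℙ) = ∫ x, id (e x) ∂ℙ :=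
      integral_map (μ := ℙ) hm.aemeasurable aestronglyMeasurable_id
    rw [hg] at h
    rw [show (fun ω => e ω) = fun x => id (e x) from rfl, ← h]
    exact aux_gaussian_mean v
  have hsq : (∫ ω, (e ω)^2 ∂ℙ) = (∫ x, x^2 ∂(gaussianReal 0 v)) := by
    have h : ∫ y, y^2 ∂(Measure.map e ℙ) = ∫ x, (e x)^2 ∂ℙ :=
      integral_map (μ := ℙ) hm.aemeasurable ((measurable_id.pow_const 2).aestronglyMeasurable)
    rw [hg] at h
    rw [← h]
  refine ⟨h2, hmean, hsq, ?_⟩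
  rw [variance_eq_sub h2]
  have : (∫ ω, (e ^ 2) ω ∂ℙ) = ∫ ω, (e ω)^2 ∂ℙ := rfl
  rw [this, hsq, hmean]
  ring

section Aux2
variable {Ω : Type*} [MeasureSpace Ω] [IsProbabilityMeasure (ℙ : Measure Ω)]

lemma aux_tim_E {e : ℕ → Ω → ℝ} {v : NNReal} (hm : ∀ j, Measurable (e j))
    (hg : ∀ j, Measure.map (e j) ℙ = gaussianReal 0 v)
    (hind : Pairwise fun i j => IndepFun (e i) (e j) ℙ) :
    TendstoInMeasure ℙ (fun (n : ℕ) ω => (n:ℝ)⁻¹ * ∑ j ∈ range n, e j ω) atTop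
      (fun _ => (0:ℝ)) := by
  apply aux_tim_avg (fun j => (aux_eps (hm j) (hg j)).1) (fun j => (aux_eps (hm j) (hg j)).2.1)
    hind
  have hvv : ∀ j, variance (e j) ℙ = ∫ x, x^2 ∂(gaussianReal 0 v) :=
    fun j => (aux_eps (hm j) (hg j)).2.2.2
  have hident : ∀ n : ℕ, (∑ j ∈ range n, variance (e j) ℙ)/(n:ℝ)^2
      = (∫ x, x^2 ∂(gaussianReal 0 v)) * (n:ℝ)⁻¹ := by
    intro n
    simp only [hvv, Finset.sum_const, card_range, nsmul_eq_mul]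
    rcases eq_or_ne (n:ℝ) 0 with h|h
    · simp [h]
    · field_simp
  have h0 : Tendsto (fun n : ℕ => (∫ x, x^2 ∂(gaussianReal 0 v)) * (n:ℝ)⁻¹) atTop (𝓝 0) := by
    simpa using tendsto_inv_atTop_nhds_zero_nat.const_mul (∫ x, x^2 ∂(gaussianReal 0 v))
  exact h0.congr (fun n => (hident n).symm)

lemma aux_tim_B {e : ℕ → Ω → ℝ} {v : NNReal} {c : ℕ → ℝ} {S : ℝ}
    (hm : ∀ j, Measurable (e j))
    (hg : ∀ j, Measure.map (e j) ℙ = gaussianReal 0 v)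
    (hind : Pairwise fun i j => IndepFun (e i) (e j) ℙ)
    (hc : Tendsto (fun n : ℕ => (n:ℝ)⁻¹ * ∑ j ∈ range n, (c j)^2) atTop (𝓝 S)) :
    TendstoInMeasure ℙ (fun (n : ℕ) ω => (n:ℝ)⁻¹ * ∑ j ∈ range n, c j * e j ω) atTop
      (fun _ => (0:ℝ)) := by
  apply aux_tim_avg (ξ := fun j ω => c j * e j ω)
    (fun j => ((aux_eps (hm j) (hg j)).1).const_mul (c j))
    (fun j => by rw [integral_const_mul, (aux_eps (hm j) (hg j)).2.1, mul_zero])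
    (fun i j hij => (hind hij).comp (measurable_const_mul (c i)) (measurable_const_mul (c j)))
  have hvv : ∀ j, variance (fun ω => c j * e j ω) ℙ
      = (c j)^2 * ∫ x, x^2 ∂(gaussianReal 0 v) := by
    intro j
    rw [variance_const_mul, (aux_eps (hm j) (hg j)).2.2.2]
  have hident : ∀ n : ℕ, (∑ j ∈ range n, variance (fun ω => c j * e j ω) ℙ)/(n:ℝ)^2
      = (∫ x, x^2 ∂(gaussianReal 0 v)) * (((n:ℝ)⁻¹ * ∑ j ∈ range n, (c j)^2) * (n:ℝ)⁻¹) := by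
    intro n
    simp only [hvv, ← Finset.sum_mul]
    rcases eq_or_ne (n:ℝ) 0 with h|h
    · simp [h]
    · field_simp
  have h0 : Tendsto (fun n : ℕ => (∫ x, x^2 ∂(gaussianReal 0 v))
      * (((n:ℝ)⁻¹ * ∑ j ∈ range n, (c j)^2) * (n:ℝ)⁻¹)) atTop (𝓝 0) := by
    simpa using ((hc.mul tendsto_inv_atTop_nhds_zero_nat).const_mul
      (∫ x, x^2 ∂(gaussianReal 0 v)))
  exact h0.congr (fun n => (hident n).symm)

lemma aux_tim_C {e f : ℕ → Ω → ℝ} {v w : NNReal}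
    (hme : ∀ j, Measurable (e j)) (hmf : ∀ j, Measurable (f j))
    (hge : ∀ j, Measure.map (e j) ℙ = gaussianReal 0 v)
    (hgf : ∀ j, Measure.map (f j) ℙ = gaussianReal 0 w)
    (hpair : Pairwise fun i j =>
      IndepFun (fun ω => e i ω * f i ω) (fun ω => e j ω * f j ω) ℙ)
    (hj : ∀ j, IndepFun (e j) (f j) ℙ) :
    TendstoInMeasure ℙ (fun (n : ℕ) ω => (n:ℝ)⁻¹ * ∑ j ∈ range n, e j ω * f j ω) atTop
      (fun _ => (0:ℝ)) := by
  have hsqind : ∀ j, IndepFun (fun ω => (e j ω)^2) (fun ω => (f j ω)^2) ℙ :=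
    fun j => (hj j).comp (measurable_id.pow_const 2) (measurable_id.pow_const 2)
  have hintsq : ∀ j, Integrable (fun ω => (e j ω)^2 * (f j ω)^2) ℙ := fun j =>
    (hsqind j).integrable_mul ((aux_eps (hme j) (hge j)).1.integrable_sq)
      ((aux_eps (hmf j) (hgf j)).1.integrable_sq)
  have hL2 : ∀ j, MemLp (fun ω => e j ω * f j ω) 2 ℙ := by
    intro j
    refine (memLp_two_iff_integrable_sq ((hme j).mul (hmf j)).aestronglyMeasurable).2 ?_
    exact (hintsq j).congr (ae_of_all _ fun ω => by simp only [Pi.mul_apply]; ring)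
  have hmean : ∀ j, (∫ ω, e j ω * f j ω ∂ℙ) = 0 := by
    intro j
    have h := (hj j).integral_fun_mul_eq_mul_integral
      ((aux_eps (hme j) (hge j)).1.integrable one_le_two).aestronglyMeasurable
      ((aux_eps (hmf j) (hgf j)).1.integrable one_le_two).aestronglyMeasurable
    have h2 : (∫ ω, e j ω * f j ω ∂ℙ)
        = (∫ ω, e j ω ∂ℙ) * (∫ ω, f j ω ∂ℙ) := h
    rw [h2, (aux_eps (hme j) (hge j)).2.1, zero_mul]
  apply aux_tim_avg (ξ := fun j ω => e j ω * f j ω) hL2 hmean hpair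
  have hvv : ∀ j, variance (fun ω => e j ω * f j ω) ℙ
      = (∫ x, x^2 ∂(gaussianReal 0 v)) * (∫ x, x^2 ∂(gaussianReal 0 w)) := by
    intro j
    rw [variance_eq_sub (hL2 j), hmean j]
    have h : (∫ ω, ((fun ω => e j ω * f j ω) ^ 2) ω ∂ℙ)
        = ∫ ω, (e j ω)^2 * (f j ω)^2 ∂ℙ :=
      integral_congr_ae (ae_of_all _ fun ω => by simp [Pi.pow_apply]; ring)
    rw [h]
    have h2 : (∫ ω, (e j ω)^2 * (f j ω)^2 ∂ℙ)
        = (∫ ω, (e j ω)^2 ∂ℙ) * (∫ ω, (f j ω)^2 ∂ℙ) :=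
      (hsqind j).integral_fun_mul_eq_mul_integral ((aux_eps (hme j) (hge j)).1.integrable_sq).aestronglyMeasurable
        ((aux_eps (hmf j) (hgf j)).1.integrable_sq).aestronglyMeasurable
    rw [h2, (aux_eps (hme j) (hge j)).2.2.1, (aux_eps (hmf j) (hgf j)).2.2.1]
    ring
  have hident : ∀ n : ℕ, (∑ j ∈ range n, variance (fun ω => e j ω * f j ω) ℙ)/(n:ℝ)^2
      = ((∫ x, x^2 ∂(gaussianReal 0 v)) * (∫ x, x^2 ∂(gaussianReal 0 w))) * (n:ℝ)⁻¹ := by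
    intro n
    simp only [hvv, Finset.sum_const, card_range, nsmul_eq_mul]
    rcases eq_or_ne (n:ℝ) 0 with h|h
    · simp [h]
    · field_simp
  have h0 : Tendsto (fun n : ℕ =>
      ((∫ x, x^2 ∂(gaussianReal 0 v)) * (∫ x, x^2 ∂(gaussianReal 0 w))) * (n:ℝ)⁻¹)
      atTop (𝓝 0) := by
    simpa using tendsto_inv_atTop_nhds_zero_nat.const_mul
      ((∫ x, x^2 ∂(gaussianReal 0 v)) * (∫ x, x^2 ∂(gaussianReal 0 w)))
  exact h0.congr (fun n => (hident n).symm)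

end Aux2


/-- under the functional ME system (fixed μ_j with empirical mean
→ μ̄ and empirical variance → Δ > 0, i.i.d. error triples with independent
mean-zero Gaussian components of variances σ₁², σ₂², σ₃², β₃ ≠ 0), the
estimator β̂₂ = S_yz/S_xz of the sample covariances converges in probability
to β₂. -/
theorem stmt12
    {Ω : Type*} [MeasureSpace Ω] [IsProbabilityMeasure (ℙ : Measure Ω)]
    (μseq : ℕ → ℝ) (μbar Δ α₂ α₃ β₂ β₃ : ℝ) (v₁ v₂ v₃ : NNReal)
    (hΔpos : 0 < Δ) (hβ₃ : β₃ ≠ 0)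
    (hmean : Tendsto (fun n : ℕ =>
        (∑ j ∈ Finset.range n, μseq j) / (n : ℝ)) atTop (nhds μbar))
    (hvar : Tendsto (fun n : ℕ =>
        (∑ j ∈ Finset.range n, (μseq j - μbar) ^ 2) / (n : ℝ)) atTop (nhds Δ))
    (ε₁ ε₂ ε₃ : ℕ → Ω → ℝ)
    (hmeas₁ : ∀ j, Measurable (ε₁ j)) (hmeas₂ : ∀ j, Measurable (ε₂ j))
    (hmeas₃ : ∀ j, Measurable (ε₃ j))
    -- error triples independent across j
    (hindep : iIndepFun
      (fun j : ℕ => fun ω => (ε₁ j ω, ε₂ j ω, ε₃ j ω)) ℙ)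
    -- within each triple, independent components
    (hindep' : ∀ j, iIndepFun ![ε₁ j, ε₂ j, ε₃ j] ℙ)
    -- mean-zero Gaussian components with variances σ₁², σ₂², σ₃²
    (hg₁ : ∀ j, Measure.map (ε₁ j) ℙ = gaussianReal 0 v₁)
    (hg₂ : ∀ j, Measure.map (ε₂ j) ℙ = gaussianReal 0 v₂)
    (hg₃ : ∀ j, Measure.map (ε₃ j) ℙ = gaussianReal 0 v₃)
    (X Y Z : ℕ → Ω → ℝ)
    (hX : X = fun j ω => μseq j + ε₁ j ω)
    (hY : Y = fun j ω => α₂ + β₂ * μseq j + ε₂ j ω)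
    (hZ : Z = fun j ω => α₃ + β₃ * μseq j + ε₃ j ω)
    -- sample covariances
    (Syz Sxz : ℕ → Ω → ℝ)
    (hSyz : Syz = fun n ω =>
      (∑ j ∈ Finset.range n,
        (Y j ω - (∑ i ∈ Finset.range n, Y i ω) / (n : ℝ)) *
        (Z j ω - (∑ i ∈ Finset.range n, Z i ω) / (n : ℝ))) / (n : ℝ))
    (hSxz : Sxz = fun n ω =>
      (∑ j ∈ Finset.range n,
        (X j ω - (∑ i ∈ Finset.range n, X i ω) / (n : ℝ)) *
        (Z j ω - (∑ i ∈ Finset.range n, Z i ω) / (n : ℝ))) / (n : ℝ)) :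
    TendstoInMeasure ℙ (fun n : ℕ => fun ω => Syz n ω / Sxz n ω)
      atTop (fun _ => β₂) := by
  subst hX hY hZ hSyz hSxz
  -- deterministic limits
  have hm' : Tendsto (fun n : ℕ => (n:ℝ)⁻¹ * ∑ j ∈ range n, μseq j) atTop (𝓝 μbar) :=
    hmean.congr fun n => div_eq_inv_mul _ _
  have hvar' : Tendsto (fun n : ℕ => (n:ℝ)⁻¹ * ∑ j ∈ range n, (μseq j - μbar)^2)
      atTop (𝓝 Δ) := hvar.congr fun n => div_eq_inv_mul _ _
  have hs2 : Tendsto (fun n : ℕ => (n:ℝ)⁻¹ * ∑ j ∈ range n, (μseq j)^2)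
      atTop (𝓝 (Δ + μbar^2)) := by
    have hid : ∀ᶠ n : ℕ in atTop,
        (n:ℝ)⁻¹ * ∑ j ∈ range n, (μseq j - μbar)^2
          + (2*μbar) * ((n:ℝ)⁻¹ * ∑ j ∈ range n, μseq j) - μbar^2
        = (n:ℝ)⁻¹ * ∑ j ∈ range n, (μseq j)^2 := by
      filter_upwards [eventually_ge_atTop 1] with n hn
      have hne : (n:ℝ) ≠ 0 := Nat.cast_ne_zero.mpr (by omega)
      have hexp : ∀ j ∈ range n, (μseq j - μbar)^2
          = (μseq j)^2 - (2*μbar)*μseq j + μbar^2 := fun j _ => by ring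
      rw [Finset.sum_congr rfl hexp]
      simp only [Finset.sum_add_distrib, Finset.sum_sub_distrib, ← Finset.mul_sum,
        Finset.sum_const, card_range, nsmul_eq_mul]
      field_simp
      ring
    have hcomb := (hvar'.add (hm'.const_mul (2*μbar))).sub
      (tendsto_const_nhds (x := μbar^2) (f := atTop))
    have h2 : Δ + (2*μbar)*μbar - μbar^2 = Δ + μbar^2 := by ring
    rw [h2] at hcomb
    exact hcomb.congr' hid
  -- independence across indices
  have hind1 : Pairwise fun i j => IndepFun (ε₁ i) (ε₁ j) ℙ :=
    fun i j hij => (hindep.indepFun hij).comp measurable_fst measurable_fst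
  have hind2 : Pairwise fun i j => IndepFun (ε₂ i) (ε₂ j) ℙ :=
    fun i j hij => (hindep.indepFun hij).comp (measurable_fst.comp measurable_snd)
      (measurable_fst.comp measurable_snd)
  have hind3 : Pairwise fun i j => IndepFun (ε₃ i) (ε₃ j) ℙ :=
    fun i j hij => (hindep.indepFun hij).comp (measurable_snd.comp measurable_snd)
      (measurable_snd.comp measurable_snd)
  have hind13 : Pairwise fun i j =>
      IndepFun (fun ω => ε₁ i ω * ε₃ i ω) (fun ω => ε₁ j ω * ε₃ j ω) ℙ :=
    fun i j hij => (hindep.indepFun hij).comp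
      (measurable_fst.mul (measurable_snd.comp measurable_snd))
      (measurable_fst.mul (measurable_snd.comp measurable_snd))
  have hind23 : Pairwise fun i j =>
      IndepFun (fun ω => ε₂ i ω * ε₃ i ω) (fun ω => ε₂ j ω * ε₃ j ω) ℙ :=
    fun i j hij => (hindep.indepFun hij).comp
      ((measurable_fst.comp measurable_snd).mul (measurable_snd.comp measurable_snd))
      ((measurable_fst.comp measurable_snd).mul (measurable_snd.comp measurable_snd))
  -- independence within a triple
  have hj13 : ∀ j, IndepFun (ε₁ j) (ε₃ j) ℙ := by
    intro j
    have h := (hindep' j).indepFun (i := 0) (j := 2) (by decide)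
    simpa using h
  have hj23 : ∀ j, IndepFun (ε₂ j) (ε₃ j) ℙ := by
    intro j
    have h := (hindep' j).indepFun (i := 1) (j := 2) (by decide)
    simpa using h
  -- the eight random pieces converge to 0 in probability
  have tE1 := aux_tim_E hmeas₁ hg₁ hind1
  have tE2 := aux_tim_E hmeas₂ hg₂ hind2
  have tE3 := aux_tim_E hmeas₃ hg₃ hind3
  have tB1 := aux_tim_B hmeas₁ hg₁ hind1 hs2
  have tB2 := aux_tim_B hmeas₂ hg₂ hind2 hs2
  have tB3 := aux_tim_B hmeas₃ hg₃ hind3 hs2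
  have tC13 := aux_tim_C hmeas₁ hmeas₃ hg₁ hg₃ hind13 hj13
  have tC23 := aux_tim_C hmeas₂ hmeas₃ hg₂ hg₃ hind23 hj23
  -- measurability
  have hXm : ∀ j, Measurable (fun ω => μseq j + ε₁ j ω) := fun j => (hmeas₁ j).const_add _
  have hYm : ∀ j, Measurable (fun ω => α₂ + β₂ * μseq j + ε₂ j ω) :=
    fun j => (hmeas₂ j).const_add _
  have hZm : ∀ j, Measurable (fun ω => α₃ + β₃ * μseq j + ε₃ j ω) :=
    fun j => (hmeas₃ j).const_add _
  have hSyzm : ∀ n : ℕ, Measurable (fun ω =>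
      (∑ j ∈ range n,
        ((α₂ + β₂ * μseq j + ε₂ j ω) - (∑ i ∈ range n, (α₂ + β₂ * μseq i + ε₂ i ω)) / (n : ℝ)) *
        ((α₃ + β₃ * μseq j + ε₃ j ω) - (∑ i ∈ range n, (α₃ + β₃ * μseq i + ε₃ i ω)) / (n : ℝ)))
       / (n : ℝ)) := by
    intro n
    apply Measurable.div_const
    apply Finset.measurable_sum
    intro j _
    exact ((hYm j).sub ((Finset.measurable_sum _ fun i _ => hYm i).div_const _)).mul
      ((hZm j).sub ((Finset.measurable_sum _ fun i _ => hZm i).div_const _))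
  have hSxzm : ∀ n : ℕ, Measurable (fun ω =>
      (∑ j ∈ range n,
        ((μseq j + ε₁ j ω) - (∑ i ∈ range n, (μseq i + ε₁ i ω)) / (n : ℝ)) *
        ((α₃ + β₃ * μseq j + ε₃ j ω) - (∑ i ∈ range n, (α₃ + β₃ * μseq i + ε₃ i ω)) / (n : ℝ)))
       / (n : ℝ)) := by
    intro n
    apply Measurable.div_const
    apply Finset.measurable_sum
    intro j _
    exact ((hXm j).sub ((Finset.measurable_sum _ fun i _ => hXm i).div_const _)).mul
      ((hZm j).sub ((Finset.measurable_sum _ fun i _ => hZm i).div_const _))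
  -- main argument
  intro ε hε
  apply tendsto_of_subseq_tendsto
  intro ns hns
  obtain ⟨ms, hms, hae⟩ := aux_multi_extract
    [(fun (n:ℕ) ω => (n:ℝ)⁻¹ * ∑ j ∈ range n, ε₁ j ω, (0:ℝ)),
     (fun (n:ℕ) ω => (n:ℝ)⁻¹ * ∑ j ∈ range n, ε₂ j ω, (0:ℝ)),
     (fun (n:ℕ) ω => (n:ℝ)⁻¹ * ∑ j ∈ range n, ε₃ j ω, (0:ℝ)),
     (fun (n:ℕ) ω => (n:ℝ)⁻¹ * ∑ j ∈ range n, μseq j * ε₁ j ω, (0:ℝ)),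
     (fun (n:ℕ) ω => (n:ℝ)⁻¹ * ∑ j ∈ range n, μseq j * ε₂ j ω, (0:ℝ)),
     (fun (n:ℕ) ω => (n:ℝ)⁻¹ * ∑ j ∈ range n, μseq j * ε₃ j ω, (0:ℝ)),
     (fun (n:ℕ) ω => (n:ℝ)⁻¹ * ∑ j ∈ range n, ε₁ j ω * ε₃ j ω, (0:ℝ)),
     (fun (n:ℕ) ω => (n:ℝ)⁻¹ * ∑ j ∈ range n, ε₂ j ω * ε₃ j ω, (0:ℝ))]
    (by
      intro p hp
      fin_cases hp
      · exact tE1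
      · exact tE2
      · exact tE3
      · exact tB1
      · exact tB2
      · exact tB3
      · exact tC13
      · exact tC23) ns hns
  refine ⟨ms, ?_⟩
  have hN : Tendsto (fun k => ns (ms k)) atTop atTop := hns.comp hms
  have key : TendstoInMeasure ℙ
      (fun k ω =>
        (∑ j ∈ range (ns (ms k)),
          ((α₂ + β₂ * μseq j + ε₂ j ω)
            - (∑ i ∈ range (ns (ms k)), (α₂ + β₂ * μseq i + ε₂ i ω)) / ((ns (ms k)) : ℝ)) *
          ((α₃ + β₃ * μseq j + ε₃ j ω)
            - (∑ i ∈ range (ns (ms k)), (α₃ + β₃ * μseq i + ε₃ i ω)) / ((ns (ms k)) : ℝ)))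
         / ((ns (ms k)) : ℝ)
        /
        ((∑ j ∈ range (ns (ms k)),
          ((μseq j + ε₁ j ω)
            - (∑ i ∈ range (ns (ms k)), (μseq i + ε₁ i ω)) / ((ns (ms k)) : ℝ)) *
          ((α₃ + β₃ * μseq j + ε₃ j ω)
            - (∑ i ∈ range (ns (ms k)), (α₃ + β₃ * μseq i + ε₃ i ω)) / ((ns (ms k)) : ℝ)))
         / ((ns (ms k)) : ℝ)))
      atTop (fun _ => β₂) := by
    apply tendstoInMeasure_of_tendsto_ae
      (fun k => ((hSyzm (ns (ms k))).div (hSxzm (ns (ms k)))).aestronglyMeasurable)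
    filter_upwards [hae] with ω hω
    have hE1 : Tendsto (fun k => ((ns (ms k) : ℝ))⁻¹ * ∑ j ∈ range (ns (ms k)), ε₁ j ω)
        atTop (𝓝 0) :=
      hω (fun (n:ℕ) ω => (n:ℝ)⁻¹ * ∑ j ∈ range n, ε₁ j ω, (0:ℝ)) (by simp)
    have hE2 : Tendsto (fun k => ((ns (ms k) : ℝ))⁻¹ * ∑ j ∈ range (ns (ms k)), ε₂ j ω)
        atTop (𝓝 0) :=
      hω (fun (n:ℕ) ω => (n:ℝ)⁻¹ * ∑ j ∈ range n, ε₂ j ω, (0:ℝ)) (by simp)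
    have hE3 : Tendsto (fun k => ((ns (ms k) : ℝ))⁻¹ * ∑ j ∈ range (ns (ms k)), ε₃ j ω)
        atTop (𝓝 0) :=
      hω (fun (n:ℕ) ω => (n:ℝ)⁻¹ * ∑ j ∈ range n, ε₃ j ω, (0:ℝ)) (by simp)
    have hB1 : Tendsto
        (fun k => ((ns (ms k) : ℝ))⁻¹ * ∑ j ∈ range (ns (ms k)), μseq j * ε₁ j ω)
        atTop (𝓝 0) :=
      hω (fun (n:ℕ) ω => (n:ℝ)⁻¹ * ∑ j ∈ range n, μseq j * ε₁ j ω, (0:ℝ)) (by simp)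
    have hB2 : Tendsto
        (fun k => ((ns (ms k) : ℝ))⁻¹ * ∑ j ∈ range (ns (ms k)), μseq j * ε₂ j ω)
        atTop (𝓝 0) :=
      hω (fun (n:ℕ) ω => (n:ℝ)⁻¹ * ∑ j ∈ range n, μseq j * ε₂ j ω, (0:ℝ)) (by simp)
    have hB3 : Tendsto
        (fun k => ((ns (ms k) : ℝ))⁻¹ * ∑ j ∈ range (ns (ms k)), μseq j * ε₃ j ω)
        atTop (𝓝 0) :=
      hω (fun (n:ℕ) ω => (n:ℝ)⁻¹ * ∑ j ∈ range n, μseq j * ε₃ j ω, (0:ℝ)) (by simp)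
    have hC13 : Tendsto
        (fun k => ((ns (ms k) : ℝ))⁻¹ * ∑ j ∈ range (ns (ms k)), ε₁ j ω * ε₃ j ω)
        atTop (𝓝 0) :=
      hω (fun (n:ℕ) ω => (n:ℝ)⁻¹ * ∑ j ∈ range n, ε₁ j ω * ε₃ j ω, (0:ℝ)) (by simp)
    have hC23 : Tendsto
        (fun k => ((ns (ms k) : ℝ))⁻¹ * ∑ j ∈ range (ns (ms k)), ε₂ j ω * ε₃ j ω)
        atTop (𝓝 0) :=
      hω (fun (n:ℕ) ω => (n:ℝ)⁻¹ * ∑ j ∈ range n, ε₂ j ω * ε₃ j ω, (0:ℝ)) (by simp)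
    have hmn : Tendsto (fun k => ((ns (ms k) : ℝ))⁻¹ * ∑ j ∈ range (ns (ms k)), μseq j)
        atTop (𝓝 μbar) := hm'.comp hN
    have hsn : Tendsto (fun k => ((ns (ms k) : ℝ))⁻¹ * ∑ j ∈ range (ns (ms k)), (μseq j)^2)
        atTop (𝓝 (Δ + μbar^2)) := hs2.comp hN
    have hone : ∀ᶠ k in atTop, 1 ≤ ns (ms k) := hN.eventually_ge_atTop 1
    -- numerator
    have hnumc := ((((hsn.sub (hmn.pow 2)).const_mul (β₂*β₃)).add
        ((hB3.sub (hmn.mul hE3)).const_mul β₂)).add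
        ((hB2.sub (hmn.mul hE2)).const_mul β₃)).add
        (hC23.sub (hE2.mul hE3))
    have hnumval : β₂*β₃*((Δ + μbar^2) - μbar^2) + β₂*(0 - μbar*0) + β₃*(0 - μbar*0)
        + (0 - 0*0) = β₂*β₃*Δ := by ring
    rw [hnumval] at hnumc
    have hnum : Tendsto (fun k =>
        (∑ j ∈ range (ns (ms k)),
          ((α₂ + β₂ * μseq j + ε₂ j ω)
            - (∑ i ∈ range (ns (ms k)), (α₂ + β₂ * μseq i + ε₂ i ω)) / ((ns (ms k)) : ℝ)) *
          ((α₃ + β₃ * μseq j + ε₃ j ω)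
            - (∑ i ∈ range (ns (ms k)), (α₃ + β₃ * μseq i + ε₃ i ω)) / ((ns (ms k)) : ℝ)))
         / ((ns (ms k)) : ℝ)) atTop (𝓝 (β₂*β₃*Δ)) := by
      apply hnumc.congr'
      filter_upwards [hone] with k hk
      have hne : ((ns (ms k) : ℝ)) ≠ 0 := Nat.cast_ne_zero.mpr (by omega)
      rw [aux_decomp (ns (ms k)) hne α₂ β₂ α₃ β₃ μseq (fun j => ε₂ j ω) (fun j => ε₃ j ω)]
    -- denominator
    have hdenc := ((((hsn.sub (hmn.pow 2)).const_mul (1*β₃)).add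
        ((hB3.sub (hmn.mul hE3)).const_mul 1)).add
        ((hB1.sub (hmn.mul hE1)).const_mul β₃)).add
        (hC13.sub (hE1.mul hE3))
    have hdenval : 1*β₃*((Δ + μbar^2) - μbar^2) + 1*(0 - μbar*0) + β₃*(0 - μbar*0)
        + (0 - 0*0) = β₃*Δ := by ring
    rw [hdenval] at hdenc
    have hden : Tendsto (fun k =>
        (∑ j ∈ range (ns (ms k)),
          ((μseq j + ε₁ j ω)
            - (∑ i ∈ range (ns (ms k)), (μseq i + ε₁ i ω)) / ((ns (ms k)) : ℝ)) *
          ((α₃ + β₃ * μseq j + ε₃ j ω)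
            - (∑ i ∈ range (ns (ms k)), (α₃ + β₃ * μseq i + ε₃ i ω)) / ((ns (ms k)) : ℝ)))
         / ((ns (ms k)) : ℝ)) atTop (𝓝 (β₃*Δ)) := by
      apply hdenc.congr'
      filter_upwards [hone] with k hk
      have hne : ((ns (ms k) : ℝ)) ≠ 0 := Nat.cast_ne_zero.mpr (by omega)
      have hrw : ∀ i : ℕ, μseq i + ε₁ i ω = 0 + 1 * μseq i + ε₁ i ω := fun i => by ring
      simp only [hrw]
      rw [aux_decomp (ns (ms k)) hne 0 1 α₃ β₃ μseq (fun j => ε₁ j ω) (fun j => ε₃ j ω)]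
    have hq := hnum.div hden (mul_ne_zero hβ₃ (ne_of_gt hΔpos))
    have hval : β₂*β₃*Δ/(β₃*Δ) = β₂ := by
      field_simp
    rw [hval] at hq
    exact hq
  exact key ε hε
end
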